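/- Let P be a tower of height δ, δ inaccessible, and suppose P is the direct limit tower on V_δ (F_X is a normal filter on P(X) for each X ∈ V_δ, with coherent projections). Then there is a stationary set S ⊆ P(V_δ) such that for every X ∈ V_δ, the club filter on P(V_δ) restricted to S projects to F_X; explicitly, S = {a ⊆ V_δ : ∀X ∈ a, ∀C ∈ F_X ∩ a, a ∩ X ∈ C} works, i.e., for every X ∈ V_δ and f : V_δ^{<ω} → V_δ, {(a ∩ X) : a ∈ cl_f ∩ S} ∈ F_X. -/

import Mathlib

universe u

/-- `F` is a normal filter on `𝒫(X)` for a set `X` (in the ZF universe): a proper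
filter on the powerset of `X` that is fine and closed under diagonal intersections. -/
structure IsNormalFilterZ (X : ZFSet.{u}) (F : Set ZFSet.{u}) : Prop where
  mem_sub : ∀ A ∈ F, A ⊆ X.powerset
  inter_mem : ∀ A ∈ F, ∀ B ∈ F, A ∩ B ∈ F
  superset_mem : ∀ A ∈ F, ∀ B : ZFSet.{u}, A ⊆ B → B ⊆ X.powerset → B ∈ F
  proper : (∅ : ZFSet.{u}) ∉ F
  fine : ∀ x ∈ X, ZFSet.sep (fun a => x ∈ a) X.powerset ∈ F
  normal : ∀ A : ZFSet.{u} → ZFSet.{u}, (∀ x ∈ X, A x ∈ F) →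
    ZFSet.sep (fun a => ∀ x ∈ a, a ∈ A x) X.powerset ∈ F

/-- A tower of normal filters of height `δ`: each `X ∈ V_δ` (i.e. of rank `< δ`)
carries a normal filter `F X` on `𝒫(X)`, and for `X ⊆ Y` the filter `F Y` projects
to `F X` (`B ∈ F X` iff `{a ⊆ Y : a ∩ X ∈ B} ∈ F Y`). -/
structure TowerZ (δ : Ordinal.{u}) where
  F : ZFSet.{u} → Set ZFSet.{u}
  normal : ∀ X : ZFSet.{u}, X.rank < δ → IsNormalFilterZ X (F X)
  projects : ∀ X Y : ZFSet.{u}, X.rank < δ → Y.rank < δ → X ⊆ Y →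
    ∀ B : ZFSet.{u}, B ⊆ X.powerset →
      (B ∈ F X ↔ ZFSet.sep (fun a => a ∩ X ∈ B) Y.powerset ∈ F Y)

/-- The tower ordering: `p ≤ q` iff `⋃ p ⊇ ⋃ q` and every `a ∈ p` satisfies
`a ∩ ⋃ q ∈ q`. -/
def Tle (p q : ZFSet.{u}) : Prop :=
  ZFSet.sUnion q ⊆ ZFSet.sUnion p ∧ ∀ a ∈ p, a ∩ ZFSet.sUnion q ∈ q

namespace TowerZ

variable {δ : Ordinal.{u}} (T : TowerZ δ)

/-- `S` is `F X`-positive: a subset of `𝒫(X)` whose complement in `𝒫(X)` is not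
in `F X`. -/
def Pos (X S : ZFSet.{u}) : Prop :=
  S ⊆ X.powerset ∧ ZFSet.sep (fun a => a ∉ S) X.powerset ∉ T.F X

/-- The conditions of the tower: the sets in `V_δ` positive for some `F X`. -/
def Cond (S : ZFSet.{u}) : Prop :=
  ∃ X : ZFSet.{u}, X.rank < δ ∧ T.Pos X S

/-- Compatibility in the tower ordering. -/
def Compat (p q : ZFSet.{u}) : Prop :=
  ∃ r : ZFSet.{u}, T.Cond r ∧ Tle r p ∧ Tle r q

/-- `A` is a maximal antichain of the tower. -/
def MaxAC (A : Set ZFSet.{u}) : Prop :=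
  (∀ p ∈ A, T.Cond p) ∧ (∀ p ∈ A, ∀ q ∈ A, p ≠ q → ¬ T.Compat p q) ∧
  (∀ p : ZFSet.{u}, T.Cond p → ∃ q ∈ A, T.Compat p q)

/-- `G` is a generic filter on the tower: a filter on the poset of conditions
meeting every maximal antichain (of the ground model). -/
def Generic (G : Set ZFSet.{u}) : Prop :=
  (∀ p ∈ G, T.Cond p) ∧
  (∀ p ∈ G, ∀ q : ZFSet.{u}, T.Cond q → Tle p q → q ∈ G) ∧
  (∀ p ∈ G, ∀ q ∈ G, ∃ r ∈ G, Tle r p ∧ Tle r q) ∧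
  (∀ A : Set ZFSet.{u}, T.MaxAC A → ∃ p ∈ A, p ∈ G)

/-- `p` forces `q ∈ G`: every condition below `p` is compatible with `q`. -/
def Forces (p q : ZFSet.{u}) : Prop :=
  ∀ r : ZFSet.{u}, T.Cond r → Tle r p → T.Compat r q

end TowerZ

/-- `p` and `q` are disjoint conditions: for any `Z ∈ V_δ` containing `⋃ p` and
`⋃ q`, no `a ⊆ Z` satisfies both `a ∩ ⋃ p ∈ p` and `a ∩ ⋃ q ∈ q`. -/
def Disj (δ : Ordinal.{u}) (p q : ZFSet.{u}) : Prop :=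
  ∀ Z : ZFSet.{u}, Z.rank < δ → ZFSet.sUnion p ⊆ Z → ZFSet.sUnion q ⊆ Z →
    ∀ a ∈ Z.powerset, ¬ (a ∩ ZFSet.sUnion p ∈ p ∧ a ∩ ZFSet.sUnion q ∈ q)

/-- The diagonal stationary set `S = {a ⊆ V_δ : ∀ X ∈ a, ∀ C ∈ F_X ∩ a, a ∩ X ∈ C}`. -/
def SdiagZ (δ : Ordinal.{u}) (T : TowerZ δ) : Set ZFSet.{u} :=
  {a : ZFSet.{u} | (∀ x ∈ a, x.rank < δ) ∧
    ∀ X ∈ a, ∀ C ∈ a, C ∈ T.F X → a ∩ X ∈ C}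


section Aux
open ZFSet Ordinal

theorem ZFSet.mem_toSet (a u : ZFSet.{u}) : a ∈ u.toSet ↔ a ∈ u := Iff.rfl

instance smallToSetZ (x : ZFSet.{u}) : Small.{u} x.toSet := ZFSet.small_coe x


theorem typein_out_lt (α : Ordinal.{u}) (i : (Quotient.out α).α) :
    @Ordinal.typein _ (Quotient.out α).r (Quotient.out α).wo i < α :=
  (@Ordinal.typein_lt_type _ _ (Quotient.out α).wo i).trans_eq (Quotient.out_eq α)

noncomputable def Vz : Ordinal.{u} → ZFSet.{u} := fun α =>
  ZFSet.sUnion (ZFSet.range fun i : α.out.α =>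
    ZFSet.powerset (Vz (@Ordinal.typein _ (Quotient.out α).r (Quotient.out α).wo i)))
termination_by α => α
decreasing_by
  exact typein_out_lt _ i

theorem mem_Vz_iff {α : Ordinal.{u}} {x : ZFSet.{u}} :
    x ∈ Vz α ↔ ∃ β < α, x ⊆ Vz β := by
  rw [Vz, ZFSet.mem_sUnion]
  constructor
  · rintro ⟨y, hy, hxy⟩
    rw [ZFSet.mem_range] at hy
    obtain ⟨i, rfl⟩ := hy
    exact ⟨_, typein_out_lt _ i, (ZFSet.mem_powerset).1 hxy⟩
  · rintro ⟨β, hβ, hx⟩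
    obtain ⟨i, hi⟩ := @Ordinal.typein_surj _ (Quotient.out α).r (Quotient.out α).wo β
      (by rwa [show Ordinal.type (Quotient.out α).r = α from Quotient.out_eq α])
    refine ⟨_, ZFSet.mem_range.2 ⟨i, rfl⟩, ZFSet.mem_powerset.2 ?_⟩
    rwa [hi]

theorem mem_Vz {α : Ordinal.{u}} {x : ZFSet.{u}} : x ∈ Vz α ↔ x.rank < α := by
  induction α using Ordinal.induction generalizing x with
  | _ α ih =>
    rw [mem_Vz_iff]
    constructor
    · rintro ⟨β, hβ, hx⟩
      have : x.rank ≤ β := by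
        rw [ZFSet.rank_le_iff]; intro y hy; rw [← ih β hβ]; exact hx hy
      exact this.trans_lt hβ
    · intro hr
      exact ⟨x.rank, hr, fun y hy => (ih _ hr).2 (ZFSet.rank_lt_of_mem hy)⟩

theorem rank_Vz_le (α : Ordinal.{u}) : (Vz α).rank ≤ α := by
  rw [ZFSet.rank_le_iff]; intro y hy; exact mem_Vz.1 hy

noncomputable def VzCard (β : Ordinal.{u}) : Cardinal.{u} := Cardinal.mk (Shrink.{u} (Vz β).toSet)



theorem powerset_Vz (γ : Ordinal.{u}) : ZFSet.powerset (Vz γ) = Vz (γ + 1) := by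
  apply ZFSet.ext
  intro x
  rw [ZFSet.mem_powerset, mem_Vz, Ordinal.add_one_eq_succ, Order.lt_succ_iff, ZFSet.rank_le_iff]
  exact ⟨fun h y hy => mem_Vz.1 (h hy), fun h y hy => mem_Vz.2 (h hy)⟩

theorem VzCard_succ_le (γ : Ordinal.{u}) : VzCard (γ + 1) ≤ 2 ^ VzCard γ := by
  rw [VzCard, VzCard, ← Cardinal.mk_set]
  refine Cardinal.mk_le_of_injective (f := fun xh =>
    {w : Shrink.{u} (Vz γ).toSet | (((equivShrink (Vz γ).toSet).symm w : _) : ZFSet)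
      ∈ (((equivShrink (Vz (γ+1)).toSet).symm xh : _) : ZFSet)}) ?_
  intro a b hab
  apply (equivShrink _).symm.injective
  apply Subtype.ext
  apply ZFSet.ext
  intro w
  have ha : (((equivShrink (Vz (γ+1)).toSet).symm a : _) : ZFSet) ⊆ Vz γ :=
    ZFSet.mem_powerset.1 (by rw [powerset_Vz]
                             exact (ZFSet.mem_toSet _ _).1 ((equivShrink _).symm a).2)
  have hb : (((equivShrink (Vz (γ+1)).toSet).symm b : _) : ZFSet) ⊆ Vz γ :=
    ZFSet.mem_powerset.1 (by rw [powerset_Vz]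
                             exact (ZFSet.mem_toSet _ _).1 ((equivShrink _).symm b).2)
  constructor
  · intro hw
    have hwv : w ∈ (Vz γ).toSet := (ZFSet.mem_toSet _ _).2 (ha hw)
    have : equivShrink (Vz γ).toSet ⟨w, hwv⟩ ∈ {w : Shrink.{u} (Vz γ).toSet |
        (((equivShrink (Vz γ).toSet).symm w : _) : ZFSet)
        ∈ (((equivShrink (Vz (γ+1)).toSet).symm a : _) : ZFSet)} := by
      simp only [Set.mem_setOf_eq, Equiv.symm_apply_apply]
      exact hw
    simpa using (Set.ext_iff.mp hab _).1 this
  · intro hw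
    have hwv : w ∈ (Vz γ).toSet := (ZFSet.mem_toSet _ _).2 (hb hw)
    have : equivShrink (Vz γ).toSet ⟨w, hwv⟩ ∈ {w : Shrink.{u} (Vz γ).toSet |
        (((equivShrink (Vz γ).toSet).symm w : _) : ZFSet)
        ∈ (((equivShrink (Vz (γ+1)).toSet).symm b : _) : ZFSet)} := by
      simp only [Set.mem_setOf_eq, Equiv.symm_apply_apply]
      exact hw
    simpa using (Set.ext_iff.mp hab _).2 this

theorem VzCard_le_sum (β : Ordinal.{u}) :
    VzCard β ≤ Cardinal.sum (fun i : (Quotient.out β).α =>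
      VzCard (@Ordinal.typein _ (Quotient.out β).r (Quotient.out β).wo i + 1)) := by
  simp only [VzCard]
  rw [← Cardinal.mk_sigma]
  refine Cardinal.mk_le_of_surjective (f := fun p :
      (Σ i : (Quotient.out β).α,
        Shrink.{u} (Vz (@Ordinal.typein _ (Quotient.out β).r (Quotient.out β).wo i + 1)).toSet) =>
      equivShrink (Vz β).toSet ⟨(((equivShrink _).symm p.2 : _) : ZFSet), ?_⟩) ?_
  · rcases p with ⟨i, w⟩
    dsimp only
    have h1 : (((equivShrink _).symm w : _) : ZFSet) ∈
        Vz (@Ordinal.typein _ (Quotient.out β).r (Quotient.out β).wo i + 1) :=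
      (ZFSet.mem_toSet _ _).1 ((equivShrink _).symm w).2
    rw [(ZFSet.mem_toSet _ _), mem_Vz]
    rw [mem_Vz] at h1
    exact h1.trans_le (by rw [Ordinal.add_one_eq_succ]
                          exact Order.succ_le_of_lt (typein_out_lt β i))
  · intro xh
    set x := (equivShrink (Vz β).toSet).symm xh with hx
    have hmem : (x : ZFSet) ∈ Vz β := (ZFSet.mem_toSet _ _).1 x.2
    obtain ⟨γ, hγβ, hsub⟩ := mem_Vz_iff.1 hmem
    obtain ⟨i, hi⟩ := @Ordinal.typein_surj _ (Quotient.out β).r (Quotient.out β).wo γ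
      (by rwa [show Ordinal.type (Quotient.out β).r = β from Quotient.out_eq β])
    have hxy : (x : ZFSet) ∈ (Vz (@Ordinal.typein _ (Quotient.out β).r (Quotient.out β).wo i + 1)).toSet := by
      refine (ZFSet.mem_toSet _ _).2 (mem_Vz.2 ?_)
      have : (x : ZFSet).rank ≤ γ := ZFSet.rank_le_iff.2 (fun y hy => mem_Vz.1 (hsub hy))
      rw [← hi] at this
      exact this.trans_lt (lt_add_one _)
    refine ⟨⟨i, equivShrink _ ⟨(x : ZFSet), hxy⟩⟩, ?_⟩
    apply (equivShrink (Vz β).toSet).symm.injective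
    rw [Equiv.symm_apply_apply, ← hx]
    apply Subtype.ext
    simp

theorem VzCard_lt {κ : Cardinal.{u}} (hκ : κ.IsInaccessible) :
    ∀ β < κ.ord, VzCard β < κ := by
  intro β
  induction β using Ordinal.induction with
  | _ β ih =>
    intro hβ
    refine (VzCard_le_sum β).trans_lt (Cardinal.sum_lt_of_isRegular hκ.isRegular ?_ ?_)
    · exact ((Ordinal.card_type _).symm.trans (congrArg Ordinal.card (Quotient.out_eq β))).trans_lt (Cardinal.lt_ord.1 hβ)
    · intro i
      have hti := typein_out_lt β i
      refine (VzCard_succ_le _).trans_lt (hκ.isStrongPrelimit ?_)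
      exact ih _ hti (hti.trans hβ)

theorem mem_Vz_of_mem {α : Ordinal.{u}} {x y : ZFSet.{u}} (hx : x ∈ Vz α) (hy : y ∈ x) :
    y ∈ Vz α :=
  mem_Vz.2 ((ZFSet.rank_lt_of_mem hy).trans (mem_Vz.1 hx))

theorem subset_Vz_of_mem {α : Ordinal.{u}} {x : ZFSet.{u}} (hx : x ∈ Vz α) : x ⊆ Vz α :=
  fun _ hy => mem_Vz_of_mem hx hy

noncomputable def hOp (f : List ZFSet.{u} → ZFSet.{u}) (β : Ordinal.{u}) : Ordinal.{u} :=
  ⨆ l : List (Shrink.{u} (Vz β).toSet),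
    ((f (l.map (fun w => (((equivShrink (Vz β).toSet).symm w : _) : ZFSet)))).rank + 1)

theorem hOp_lt {κ : Cardinal.{u}} (hκ : κ.IsInaccessible) {f : List ZFSet.{u} → ZFSet.{u}}
    (hf : ∀ l : List ZFSet.{u}, (∀ x ∈ l, x.rank < κ.ord) → (f l).rank < κ.ord)
    {β : Ordinal.{u}} (hβ : β < κ.ord) : hOp f β < κ.ord := by
  refine Cardinal.iSup_lt_ord_of_isRegular hκ.isRegular ?_ ?_
  · refine (Cardinal.mk_list_le_max _).trans_lt (max_lt hκ.1 ?_)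
    exact VzCard_lt hκ β hβ
  · intro l
    rw [Ordinal.add_one_eq_succ]
    refine (Cardinal.isSuccLimit_ord hκ.1.le).succ_lt (hf _ ?_)
    intro x hx
    rw [List.mem_map] at hx
    obtain ⟨w, _, rfl⟩ := hx
    exact (mem_Vz.1 ((ZFSet.mem_toSet _ _).1 ((equivShrink (Vz β).toSet).symm w).2)).trans hβ

theorem rank_lt_hOp {f : List ZFSet.{u} → ZFSet.{u}} {β : Ordinal.{u}} {l : List ZFSet.{u}}
    (hl : ∀ x ∈ l, x ∈ Vz β) : (f l).rank < hOp f β := by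
  have heq : (l.attach.map (fun x => equivShrink (Vz β).toSet
        ⟨x.1, (ZFSet.mem_toSet _ _).2 (hl x.1 x.2)⟩)).map
      (fun w => (((equivShrink (Vz β).toSet).symm w : _) : ZFSet)) = l := by
    rw [List.map_map]
    conv_rhs => rw [← List.attach_map_subtype_val l]
    apply List.map_congr_left
    intro x _
    simp
  calc (f l).rank < (f l).rank + 1 := lt_add_one _
    _ ≤ hOp f β := by
        conv_lhs => rw [← heq]
        exact Ordinal.le_iSup _ _

noncomputable def aseq (f : List ZFSet.{u} → ZFSet.{u}) (X : ZFSet.{u}) : ℕ → Ordinal.{u}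
  | 0 => max (X.rank + 1) Ordinal.omega0
  | n+1 => max (hOp f (aseq f X n)) (aseq f X n) + 1

theorem aseq_lt {κ : Cardinal.{u}} (hκ : κ.IsInaccessible) {f : List ZFSet.{u} → ZFSet.{u}}
    (hf : ∀ l : List ZFSet.{u}, (∀ x ∈ l, x.rank < κ.ord) → (f l).rank < κ.ord)
    {X : ZFSet.{u}} (hX : X.rank < κ.ord) : ∀ n, aseq f X n < κ.ord := by
  intro n
  induction n with
  | zero =>
    refine max_lt ?_ ?_
    · rw [Ordinal.add_one_eq_succ]
      exact (Cardinal.isSuccLimit_ord hκ.1.le).succ_lt hX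
    · rw [← Cardinal.ord_aleph0]
      exact Cardinal.ord_lt_ord.2 hκ.1
  | succ n ih =>
    show max (hOp f (aseq f X n)) (aseq f X n) + 1 < κ.ord
    rw [Ordinal.add_one_eq_succ]
    exact (Cardinal.isSuccLimit_ord hκ.1.le).succ_lt (max_lt (hOp_lt hκ hf ih) ih)

theorem aseq_mono {f : List ZFSet.{u} → ZFSet.{u}} {X : ZFSet.{u}} : Monotone (aseq f X) := by
  apply monotone_nat_of_le_succ
  intro n
  calc aseq f X n ≤ max (hOp f (aseq f X n)) (aseq f X n) := le_max_right _ _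
    _ ≤ _ + 1 := le_of_lt (lt_add_one _)

noncomputable def alphaOf (f : List ZFSet.{u} → ZFSet.{u}) (X : ZFSet.{u}) : Ordinal.{u} :=
  ⨆ n : ℕ, aseq f X n

theorem alphaOf_lt {κ : Cardinal.{u}} (hκ : κ.IsInaccessible) {f : List ZFSet.{u} → ZFSet.{u}}
    (hf : ∀ l : List ZFSet.{u}, (∀ x ∈ l, x.rank < κ.ord) → (f l).rank < κ.ord)
    {X : ZFSet.{u}} (hX : X.rank < κ.ord) : alphaOf f X < κ.ord := by
  refine Cardinal.iSup_lt_ord_lift_of_isRegular hκ.isRegular ?_ (fun n => aseq_lt hκ hf hX n)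
  simp only [Cardinal.mk_eq_aleph0]
  simpa using hκ.1

theorem mem_Vz_alphaOf_X {f : List ZFSet.{u} → ZFSet.{u}} {X : ZFSet.{u}} :
    X ∈ Vz (alphaOf f X) := by
  rw [mem_Vz]
  calc X.rank < X.rank + 1 := lt_add_one _
    _ ≤ aseq f X 0 := le_max_left _ _
    _ ≤ alphaOf f X := Ordinal.le_iSup _ 0

theorem omega0_le_alphaOf {f : List ZFSet.{u} → ZFSet.{u}} {X : ZFSet.{u}} :
    Ordinal.omega0 ≤ alphaOf f X :=
  le_trans (le_max_right _ _) (Ordinal.le_iSup (aseq f X) 0)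

theorem closed_alphaOf {f : List ZFSet.{u} → ZFSet.{u}} {X : ZFSet.{u}} {l : List ZFSet.{u}}
    (hl : ∀ x ∈ l, x ∈ Vz (alphaOf f X)) : f l ∈ Vz (alphaOf f X) := by
  have common : ∃ n, ∀ x ∈ l, x ∈ Vz (aseq f X n) := by
    induction l with
    | nil => exact ⟨0, by simp⟩
    | cons x t iht =>
      obtain ⟨n, hn⟩ := iht (fun y hy => hl y (List.mem_cons_of_mem _ hy))
      have hx : x ∈ Vz (alphaOf f X) := hl x (List.mem_cons_self)
      rw [mem_Vz, alphaOf, Ordinal.lt_iSup_iff] at hx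
      obtain ⟨m, hm⟩ := hx
      refine ⟨max n m, ?_⟩
      intro y hy
      rcases List.mem_cons.1 hy with rfl | hy
      · exact mem_Vz.2 (hm.trans_le (aseq_mono (le_max_right n m)))
      · exact mem_Vz.2 ((mem_Vz.1 (hn y hy)).trans_le (aseq_mono (le_max_left n m)))
  obtain ⟨n, hn⟩ := common
  have h1 : (f l).rank < aseq f X (n+1) :=
    ((rank_lt_hOp hn).trans_le (le_max_left _ _)).trans (lt_add_one _)
  exact mem_Vz.2 (h1.trans_le (Ordinal.le_iSup (aseq f X) (n+1)))

def natz : ℕ → ZFSet.{u}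
  | 0 => ∅
  | n+1 => insert (natz n) (natz n)

theorem rank_natz : ∀ n : ℕ, (natz.{u} n).rank = n
  | 0 => ZFSet.rank_empty
  | (n+1) => by
    show (insert (natz n) (natz n)).rank = _
    rw [ZFSet.rank_insert, rank_natz n]
    rw [max_eq_left (Order.le_succ _)]; push_cast; rfl

theorem natz_inj : Function.Injective natz.{u} := by
  intro n m h
  have := congrArg ZFSet.rank h
  rw [rank_natz, rank_natz] at this
  exact_mod_cast this

theorem natz_rank_lt_omega (n : ℕ) : (natz.{u} n).rank < Ordinal.omega0 := by
  rw [rank_natz]; exact Ordinal.nat_lt_omega0 n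

section Filters

variable {δ : Ordinal.{u}} (T : TowerZ δ) {Y : ZFSet.{u}}

theorem sep_subset_powerset (p : ZFSet.{u} → Prop) :
    ZFSet.sep p Y.powerset ⊆ Y.powerset := fun _ hz => (ZFSet.mem_sep.1 hz).1

theorem powerset_mem_F (hY : Y.rank < δ) {y0 : ZFSet.{u}} (hy0 : y0 ∈ Y) :
    Y.powerset ∈ T.F Y :=
  (T.normal Y hY).superset_mem _ ((T.normal Y hY).fine y0 hy0) _
    (sep_subset_powerset _) (fun _ h => h)

theorem countable_inter_mem (hY : Y.rank < δ) (hnat : ∀ n : ℕ, natz n ∈ Y)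
    (A : ℕ → ZFSet.{u}) (hA : ∀ n, A n ∈ T.F Y) :
    ZFSet.sep (fun b => ∀ n, b ∈ A n) Y.powerset ∈ T.F Y := by
  classical
  have N := T.normal Y hY
  set A' : ZFSet.{u} → ZFSet.{u} := fun x =>
    if h : ∃ n, x = natz n then
      A h.choose ∩ ZFSet.sep (fun b => natz (h.choose + 1) ∈ b) Y.powerset
    else Y.powerset with hA'def
  have hA' : ∀ x ∈ Y, A' x ∈ T.F Y := by
    intro x hx
    rw [hA'def]
    dsimp only
    split_ifs with h
    · exact N.inter_mem _ (hA _) _ (N.fine _ (hnat _))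
    · exact powerset_mem_F T hY (hnat 0)
  have hE := N.normal A' hA'
  have hE' := N.inter_mem _ hE _ (N.fine _ (hnat 0))
  refine N.superset_mem _ hE' _ ?_ (sep_subset_powerset _)
  intro b hb
  rw [ZFSet.mem_inter, ZFSet.mem_sep] at hb
  obtain ⟨⟨hbY, hdiag⟩, hb0⟩ := hb
  rw [ZFSet.mem_sep] at hb0
  rw [ZFSet.mem_sep]
  refine ⟨hbY, ?_⟩
  have key : ∀ n, natz n ∈ b ∧ b ∈ A n := by
    intro n
    induction n with
    | zero =>
      have := hdiag _ hb0.2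
      rw [hA'def] at this
      dsimp only at this
      rw [dif_pos ⟨0, rfl⟩] at this
      have h0 : (⟨0, rfl⟩ : ∃ n, natz 0 = natz n).choose = 0 :=
        (natz_inj (⟨0, rfl⟩ : ∃ n, natz 0 = natz n).choose_spec).symm
      rw [h0] at this
      rw [ZFSet.mem_inter, ZFSet.mem_sep] at this
      exact ⟨hb0.2, this.1⟩
    | succ n ih =>
      have := hdiag _ ih.1
      rw [hA'def] at this
      dsimp only at this
      rw [dif_pos ⟨n, rfl⟩] at this
      have h0 : (⟨n, rfl⟩ : ∃ m, natz n = natz m).choose = n :=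
        (natz_inj (⟨n, rfl⟩ : ∃ m, natz n = natz m).choose_spec).symm
      rw [h0] at this
      rw [ZFSet.mem_inter, ZFSet.mem_sep] at this
      have hn1 : natz (n+1) ∈ b := this.2.2
      have := hdiag _ hn1
      rw [hA'def] at this
      dsimp only at this
      rw [dif_pos ⟨n+1, rfl⟩] at this
      have h1 : (⟨n+1, rfl⟩ : ∃ m, natz (n+1) = natz m).choose = n+1 :=
        (natz_inj (⟨n+1, rfl⟩ : ∃ m, natz (n+1) = natz m).choose_spec).symm
      rw [h1] at this
      rw [ZFSet.mem_inter] at this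
      exact ⟨hn1, this.1⟩
  exact fun n => (key n).2

theorem arity_mem (hY : Y.rank < δ) {y0 : ZFSet.{u}} (hy0 : y0 ∈ Y) (n : ℕ) :
    ∀ g : List ZFSet.{u} → ZFSet.{u}, (∀ l, (∀ x ∈ l, x ∈ Y) → g l ∈ Y) →
    ZFSet.sep (fun b => ∀ l : List ZFSet.{u}, l.length = n → (∀ x ∈ l, x ∈ b) → g l ∈ b)
      Y.powerset ∈ T.F Y := by
  have N := T.normal Y hY
  induction n with
  | zero =>
    intro g hg
    refine N.superset_mem _ (N.fine (g []) (hg [] (by simp))) _ ?_ (sep_subset_powerset _)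
    intro b hb
    rw [ZFSet.mem_sep] at hb ⊢
    refine ⟨hb.1, ?_⟩
    intro l hl _
    rw [List.length_eq_zero_iff] at hl
    subst hl
    exact hb.2
  | succ n ih =>
    intro g hg
    set A' : ZFSet.{u} → ZFSet.{u} := fun x =>
      ZFSet.sep (fun b => ∀ l : List ZFSet.{u}, l.length = n → (∀ y ∈ l, y ∈ b) →
        g (x :: l) ∈ b) Y.powerset with hA'def
    have hA' : ∀ x ∈ Y, A' x ∈ T.F Y := by
      intro x hx
      exact ih (fun l => g (x :: l)) (fun l hl => hg (x :: l) (by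
        intro y hy
        rcases List.mem_cons.1 hy with rfl | hy
        · exact hx
        · exact hl y hy))
    refine N.superset_mem _ (N.normal A' hA') _ ?_ (sep_subset_powerset _)
    intro b hb
    rw [ZFSet.mem_sep] at hb ⊢
    refine ⟨hb.1, ?_⟩
    intro l hl hlb
    cases l with
    | nil => simp at hl
    | cons x t =>
      have hx : x ∈ b := hlb x (List.mem_cons_self)
      have := hb.2 x hx
      rw [hA'def] at this
      dsimp only at this
      rw [ZFSet.mem_sep] at this
      exact this.2 t (by simpa using hl) (fun y hy => hlb y (List.mem_cons_of_mem _ hy))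

theorem closure_mem (hY : Y.rank < δ) (hnat : ∀ n : ℕ, natz n ∈ Y)
    (g : List ZFSet.{u} → ZFSet.{u}) (hg : ∀ l, (∀ x ∈ l, x ∈ Y) → g l ∈ Y) :
    ZFSet.sep (fun b => ∀ l : List ZFSet.{u}, (∀ x ∈ l, x ∈ b) → g l ∈ b)
      Y.powerset ∈ T.F Y := by
  have N := T.normal Y hY
  have hcnt := countable_inter_mem T hY hnat
    (fun n => ZFSet.sep (fun b => ∀ l : List ZFSet.{u}, l.length = n → (∀ x ∈ l, x ∈ b) →
      g l ∈ b) Y.powerset)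
    (fun n => arity_mem T hY (hnat 0) n g hg)
  refine N.superset_mem _ hcnt _ ?_ (sep_subset_powerset _)
  intro b hb
  rw [ZFSet.mem_sep] at hb ⊢
  refine ⟨hb.1, ?_⟩
  intro l hl
  have := hb.2 l.length
  rw [ZFSet.mem_sep] at this
  exact this.2 l rfl hl

theorem diag_mem (hY : Y.rank < δ) {y0 : ZFSet.{u}} (hy0 : y0 ∈ Y)
    (hsub : ∀ Z : ZFSet.{u}, Z ∈ Y → Z ⊆ Y ∧ Z.rank < δ) :
    ZFSet.sep (fun b => ∀ Z ∈ b, ∀ C ∈ b, C ∈ T.F Z → b ∩ Z ∈ C) Y.powerset ∈ T.F Y := by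
  classical
  have N := T.normal Y hY
  have inner : ∀ Z : ZFSet.{u}, Z ∈ Y →
      ZFSet.sep (fun b => ∀ C ∈ b, C ∈ T.F Z → b ∩ Z ∈ C) Y.powerset ∈ T.F Y := by
    intro Z hZ
    set A' : ZFSet.{u} → ZFSet.{u} := fun C =>
      if C ∈ T.F Z then ZFSet.sep (fun b => b ∩ Z ∈ C) Y.powerset else Y.powerset with hA'def
    have hA' : ∀ C ∈ Y, A' C ∈ T.F Y := by
      intro C hC
      rw [hA'def]
      dsimp only
      split_ifs with h
      · exact (T.projects Z Y (hsub Z hZ).2 hY (hsub Z hZ).1 C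
          ((T.normal Z (hsub Z hZ).2).mem_sub C h)).1 h
      · exact powerset_mem_F T hY hy0
    refine N.superset_mem _ (N.normal A' hA') _ ?_ (sep_subset_powerset _)
    intro b hb
    rw [ZFSet.mem_sep] at hb ⊢
    refine ⟨hb.1, ?_⟩
    intro C hC hCF
    have := hb.2 C hC
    rw [hA'def] at this
    dsimp only at this
    rw [if_pos hCF, ZFSet.mem_sep] at this
    exact this.2
  set A'' : ZFSet.{u} → ZFSet.{u} := fun Z =>
    ZFSet.sep (fun b => ∀ C ∈ b, C ∈ T.F Z → b ∩ Z ∈ C) Y.powerset with hA''def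
  refine N.superset_mem _ (N.normal A'' inner) _ ?_ (sep_subset_powerset _)
  intro b hb
  rw [ZFSet.mem_sep] at hb ⊢
  refine ⟨hb.1, ?_⟩
  intro Z hZ C hC hCF
  have := hb.2 Z hZ
  rw [hA''def] at this
  dsimp only at this
  rw [ZFSet.mem_sep] at this
  exact this.2 C hC hCF

end Filters



theorem main_proj (κ : Cardinal.{u}) (hκ : κ.IsInaccessible) (T : TowerZ κ.ord)
    (X : ZFSet.{u}) (hX : X.rank < κ.ord)
    (f : List ZFSet.{u} → ZFSet.{u})
    (hf : ∀ l : List ZFSet.{u}, (∀ x ∈ l, x.rank < κ.ord) → (f l).rank < κ.ord) :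
    ZFSet.sep (fun z => ∃ a ∈ SdiagZ κ.ord T,
      (∀ l : List ZFSet.{u}, (∀ x ∈ l, x ∈ a) → f l ∈ a) ∧ z = a ∩ X) X.powerset ∈ T.F X := by
  have hα : alphaOf f X < κ.ord := alphaOf_lt hκ hf hX
  have hY : (Vz (alphaOf f X)).rank < κ.ord := (rank_Vz_le _).trans_lt hα
  have hXY : X ⊆ Vz (alphaOf f X) := subset_Vz_of_mem mem_Vz_alphaOf_X
  have hnat : ∀ n : ℕ, natz n ∈ Vz (alphaOf f X) :=
    fun n => mem_Vz.2 ((natz_rank_lt_omega n).trans_le omega0_le_alphaOf)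
  have N := T.normal _ hY
  have hcl := closure_mem T hY hnat f (fun l hl => closed_alphaOf hl)
  have hdg := diag_mem T hY (hnat 0)
    (fun Z hZ => ⟨subset_Vz_of_mem hZ, (mem_Vz.1 hZ).trans hα⟩)
  have hD := N.inter_mem _ hcl _ hdg
  refine (T.projects X (Vz (alphaOf f X)) hX hY hXY _ (sep_subset_powerset _)).2 ?_
  refine N.superset_mem _ hD _ ?_ (sep_subset_powerset _)
  intro b hb
  rw [ZFSet.mem_inter, ZFSet.mem_sep, ZFSet.mem_sep] at hb
  obtain ⟨⟨hbY, hclb⟩, ⟨-, hdgb⟩⟩ := hb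
  rw [ZFSet.mem_sep]
  refine ⟨hbY, ?_⟩
  rw [ZFSet.mem_sep]
  constructor
  · rw [ZFSet.mem_powerset]
    exact fun z hz => (ZFSet.mem_inter.1 hz).2
  · exact ⟨b, ⟨fun x hxb => (mem_Vz.1 (ZFSet.mem_powerset.1 hbY hxb)).trans hα, hdgb⟩,
      hclb, rfl⟩


end Aux

/-- Let `P` be a tower on `V_δ`, `δ` inaccessible (`δ = κ.ord`).  Then the set
`S = {a ⊆ V_δ : ∀ X ∈ a, ∀ C ∈ F_X ∩ a, a ∩ X ∈ C}` is stationary in `𝒫(V_δ)`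
(it meets every club `cl_f`), and for every `X ∈ V_δ` the club filter on `𝒫(V_δ)`
restricted to `S` projects to `F_X`: for every `f : V_δ^{<ω} → V_δ`,
`{a ∩ X : a ∈ cl_f ∩ S} ∈ F_X`. -/
theorem stmt15 (κ : Cardinal.{u}) (hκ : κ.IsInaccessible) (T : TowerZ κ.ord) :
    (∀ f : List ZFSet.{u} → ZFSet.{u},
      (∀ l : List ZFSet.{u}, (∀ x ∈ l, x.rank < κ.ord) → (f l).rank < κ.ord) →
      ∃ a ∈ SdiagZ κ.ord T, ∀ l : List ZFSet.{u}, (∀ x ∈ l, x ∈ a) → f l ∈ a) ∧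
    (∀ X : ZFSet.{u}, X.rank < κ.ord →
      ∀ f : List ZFSet.{u} → ZFSet.{u},
        (∀ l : List ZFSet.{u}, (∀ x ∈ l, x.rank < κ.ord) → (f l).rank < κ.ord) →
        ∃ B ∈ T.F X, ∀ z : ZFSet.{u},
          z ∈ B ↔ ∃ a ∈ SdiagZ κ.ord T,
            (∀ l : List ZFSet.{u}, (∀ x ∈ l, x ∈ a) → f l ∈ a) ∧ z = a ∩ X) := by
  have main : ∀ X : ZFSet.{u}, X.rank < κ.ord →
      ∀ f : List ZFSet.{u} → ZFSet.{u},
        (∀ l : List ZFSet.{u}, (∀ x ∈ l, x.rank < κ.ord) → (f l).rank < κ.ord) →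
        ∃ B ∈ T.F X, ∀ z : ZFSet.{u},
          z ∈ B ↔ ∃ a ∈ SdiagZ κ.ord T,
            (∀ l : List ZFSet.{u}, (∀ x ∈ l, x ∈ a) → f l ∈ a) ∧ z = a ∩ X := by
    intro X hX f hf
    refine ⟨_, main_proj κ hκ T X hX f hf, ?_⟩
    intro z
    rw [ZFSet.mem_sep]
    constructor
    · rintro ⟨-, a, ha, hcl, rfl⟩
      exact ⟨a, ha, hcl, rfl⟩
    · rintro ⟨a, ha, hcl, rfl⟩
      refine ⟨?_, a, ha, hcl, rfl⟩
      rw [ZFSet.mem_powerset]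
      exact fun w hw => (ZFSet.mem_inter.1 hw).2
  refine ⟨?_, main⟩
  intro f hf
  have h0 : (∅ : ZFSet.{u}).rank < κ.ord := by
    rw [ZFSet.rank_empty]
    exact (Cardinal.isSuccLimit_ord hκ.1.le).pos
  obtain ⟨B, hB, hiff⟩ := main ∅ h0 f hf
  have hne : ∃ z, z ∈ B := by
    by_contra h
    push_neg at h
    rw [(ZFSet.eq_empty B).2 h] at hB
    exact (T.normal ∅ h0).proper hB
  obtain ⟨z, hz⟩ := hne
  obtain ⟨a, ha, hcl, -⟩ := (hiff z).1 hz
  exact ⟨a, ha, hcl⟩
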